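/- Let K ≥ 3 and let i_1, …, i_K be integers with i_k ≥ 1 for all k, and set f = Π_{k=1}^{K} Z_{i_k}. Then each of the polynomials f − 1 and f + 1 has a complex root with nonzero imaginary part. -/

import Mathlib

open Polynomial Real

/-- The polynomial sequence `Z`: `Z 0 = 1`, `Z 1 = X - 1`,
`Z n = (X - 2) * Z (n-1) - Z (n-2)` for `n ≥ 2`. -/
noncomputable def Z : ℕ → Polynomial ℝ
  | 0 => 1
  | 1 => X - 1
  | n + 2 => (X - 2) * Z (n + 1) - Z n



/-- Laguerre-type inequality for real-rooted polynomials. -/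
lemma laguerre (n : ℕ) : ∀ (g : ℝ[X]), g.natDegree = n → g ≠ 0 →
    (∀ z : ℂ, aeval z g = 0 → z.im = 0) → ∀ c : ℝ,
    eval c g * eval c (derivative (derivative g)) ≤ (eval c (derivative g))^2 ∧
    (eval c g ≠ 0 → 0 < n → eval c g * eval c (derivative (derivative g)) < (eval c (derivative g))^2) := by
  induction n with
  | zero =>
    intro g hdeg hg0 hroots c
    have : g = C (g.coeff 0) := Polynomial.eq_C_of_natDegree_eq_zero hdeg
    rw [this]
    simp
  | succ n ih =>
    intro g hdeg hg0 hroots c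
    -- find a complex root
    have hdegpos : 0 < g.natDegree := by omega
    obtain ⟨z, hz⟩ : ∃ z : ℂ, (g.map (algebraMap ℝ ℂ)).IsRoot z := by
      apply Complex.exists_root
      rwa [degree_map, ← natDegree_pos_iff_degree_pos]
    have hzg : aeval z g = 0 := by
      rwa [aeval_def, ← eval_map]
    have him := hroots z hzg
    set r := z.re with hr
    have hzr : z = (r : ℂ) := Complex.ext rfl him
    have hevr : eval r g = 0 := by
      have : aeval ((r : ℂ)) g = 0 := by rw [← hzr]; exact hzg
      rw [show ((r:ℂ)) = algebraMap ℝ ℂ r from rfl,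
        aeval_algebraMap_apply_eq_algebraMap_eval] at this
      have h2 : ((eval r g : ℝ) : ℂ) = 0 := this
      exact_mod_cast h2
    obtain ⟨q, hq⟩ := (dvd_iff_isRoot.2 hevr)
    have hqne : q ≠ 0 := by rintro rfl; simp at hq; exact hg0 hq
    have hdq : q.natDegree = n := by
      have := natDegree_mul (X_sub_C_ne_zero r) hqne
      rw [← hq, natDegree_X_sub_C] at this
      omega
    have hqroots : ∀ z : ℂ, aeval z q = 0 → z.im = 0 := by
      intro w hw
      apply hroots w
      rw [hq, map_mul, hw, mul_zero]
    have IH := ih q hdq hqne hqroots c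
    have hd1 : derivative g = q + (X - C r) * derivative q := by
      rw [hq, derivative_mul, derivative_X_sub_C, one_mul]
    have hd2 : derivative (derivative g) =
        2 * derivative q + (X - C r) * derivative (derivative q) := by
      rw [hd1, derivative_add, derivative_mul, derivative_X_sub_C, one_mul]
      ring
    set a := c - r with ha
    set Q := eval c q with hQ
    set Q' := eval c (derivative q) with hQ'
    set Q'' := eval c (derivative (derivative q)) with hQ''
    have e0 : eval c g = a * Q := by rw [hq]; simp [ha, hQ]
    have e1 : eval c (derivative g) = Q + a * Q' := by rw [hd1]; simp [ha, hQ, hQ']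
    have e2 : eval c (derivative (derivative g)) = 2 * Q' + a * Q'' := by
      rw [hd2]; simp [ha, hQ', hQ'']
    rw [e0, e1, e2]
    constructor
    · nlinarith [IH.1, sq_nonneg a, sq_nonneg Q, mul_nonneg (sq_nonneg a) (sub_nonneg.2 IH.1)]
    · intro hne _
      have hQne : Q ≠ 0 := by
        intro h; exact hne (by rw [h, mul_zero])
      nlinarith [IH.1, sq_nonneg a, mul_nonneg (sq_nonneg a) (sub_nonneg.2 IH.1),
        sq_pos_of_ne_zero hQne]


lemma Z_monic_deg : ∀ n : ℕ, (Z n).Monic ∧ (Z n).natDegree = n := by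
  intro n
  induction n using Nat.strong_induction_on with
  | _ n ih =>
    match n with
    | 0 => constructor <;> simp [Z, monic_one]
    | 1 =>
      constructor
      · simpa [Z] using (monic_X_sub_C (1:ℝ))
      · show (X - 1 : ℝ[X]).natDegree = 1
        rw [← map_one (C : ℝ →+* ℝ[X])]
        exact natDegree_X_sub_C 1
    | (n+2) =>
      obtain ⟨h1m, h1d⟩ := ih (n+1) (by omega)
      obtain ⟨h0m, h0d⟩ := ih n (by omega)
      have hXm : ((X : ℝ[X]) - 2).Monic := by
        rw [← map_ofNat (C : ℝ →+* ℝ[X]) 2]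
        exact monic_X_sub_C 2
      have hm : ((X - 2) * Z (n+1)).Monic := hXm.mul h1m
      have hXd : ((X : ℝ[X]) - 2).natDegree = 1 := by
        rw [← map_ofNat (C : ℝ →+* ℝ[X]) 2]
        exact natDegree_X_sub_C 2
      have hd : ((X - 2) * Z (n+1)).natDegree = n + 2 := by
        rw [natDegree_mul (hXm.ne_zero) (h1m.ne_zero), h1d, hXd]
        omega
      have hltn : (Z n).natDegree < ((X - 2) * Z (n+1)).natDegree := by
        rw [hd, h0d]; omega
      have hlt : (Z n).degree < ((X - 2) * Z (n+1)).degree :=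
        degree_lt_degree hltn
      constructor
      · show ((X - 2) * Z (n+1) - Z n).Monic
        exact hm.sub_of_left hlt
      · show ((X - 2) * Z (n+1) - Z n).natDegree = n + 2
        rw [natDegree_sub_eq_left_of_natDegree_lt hltn, hd]

lemma Z_eval_cos (u : ℝ) :
    ∀ n : ℕ, eval (2 - 2 * Real.cos u) (Z n) * Real.cos (u/2)
      = (-1)^n * Real.cos ((2*(n:ℝ)+1) * (u/2)) := by
  intro n
  induction n using Nat.strong_induction_on with
  | _ n ih =>
    match n with
    | 0 => norm_num [Z]
    | 1 =>
      have hZ1 : Z 1 = X - 1 := rfl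
      have hu2 : Real.cos u = 2 * Real.cos (u/2)^2 - 1 := by
        have h : u = 2 * (u/2) := by ring
        conv_lhs => rw [h]
        rw [Real.cos_two_mul]
      have h3 : ((2:ℝ)*(1:ℕ)+1) * (u/2) = 3 * (u/2) := by push_cast; ring
      rw [hZ1, h3, Real.cos_three_mul]
      simp only [eval_sub, eval_X, eval_one]
      rw [hu2]
      ring
    | (n+2) =>
      have IH1 := ih (n+1) (by omega)
      have IH0 := ih n (by omega)
      have hZ : Z (n+2) = (X - 2) * Z (n + 1) - Z n := rfl
      set v := u/2 with hv
      have key : Real.cos ((2*(n:ℝ)+5) * v) =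
          2 * Real.cos (2*v) * Real.cos ((2*(n:ℝ)+3) * v) - Real.cos ((2*(n:ℝ)+1) * v) := by
        have h1 := Real.cos_add ((2*(n:ℝ)+3) * v) (2*v)
        have h2 := Real.cos_sub ((2*(n:ℝ)+3) * v) (2*v)
        have e1 : (2*(n:ℝ)+3) * v + 2*v = (2*(n:ℝ)+5) * v := by ring
        have e2 : (2*(n:ℝ)+3) * v - 2*v = (2*(n:ℝ)+1) * v := by ring
        rw [e1] at h1; rw [e2] at h2; linarith
      have hcu : Real.cos u = Real.cos (2*v) := by rw [hv]; ring_nf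
      have cast1 : (2*((n:ℝ)+1)+1) = (2*(n:ℝ)+3) := by ring
      have cast2 : (2*((n:ℝ)+2)+1) = (2*(n:ℝ)+5) := by ring
      rw [hZ]
      push_cast at IH1 IH0 ⊢
      rw [cast2]
      have expand : eval (2 - 2*Real.cos u) ((X - 2) * Z (n+1) - Z n)
          = (-2*Real.cos u) * eval (2 - 2*Real.cos u) (Z (n+1)) - eval (2 - 2*Real.cos u) (Z n) := by
        simp
      rw [expand]
      rw [cast1] at IH1
      have lhs : (((-2)*Real.cos u) * eval (2 - 2*Real.cos u) (Z (n+1)) - eval (2 - 2*Real.cos u) (Z n)) * Real.cos v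
          = (-2*Real.cos u) * ((-1)^(n+1) * Real.cos ((2*(n:ℝ)+3) * v)) - ((-1)^n * Real.cos ((2*(n:ℝ)+1) * v)) := by
        have : (((-2)*Real.cos u) * eval (2 - 2*Real.cos u) (Z (n+1)) - eval (2 - 2*Real.cos u) (Z n)) * Real.cos v
          = (-2*Real.cos u) * (eval (2 - 2*Real.cos u) (Z (n+1)) * Real.cos v) - (eval (2 - 2*Real.cos u) (Z n) * Real.cos v) := by ring
        rw [this, IH1, IH0]
      rw [lhs, hcu, key]
      ring


/-- `cos (m*v) < cos v ^ m` for `2 ≤ m`, `0 < v`, `m*v ≤ π/2`. -/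
lemma cos_pow_lt (m : ℕ) (hm : 2 ≤ m) : ∀ v : ℝ, 0 < v → (m:ℝ) * v ≤ π/2 →
    Real.cos ((m:ℝ) * v) < Real.cos v ^ m := by
  induction m, hm using Nat.le_induction with
  | base =>
    intro v hv hle
    push_cast at hle ⊢
    have hv2 : v < π/2 := by linarith
    have hcv : 0 < Real.cos v := Real.cos_pos_of_mem_Ioo ⟨by linarith [pi_pos], hv2⟩
    have h1 : Real.cos v < 1 := by
      have hvpi : v ≤ π := by linarith [pi_pos]
      have := Real.strictAntiOn_cos (Set.mem_Icc.2 ⟨le_refl 0, pi_pos.le⟩)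
        (Set.mem_Icc.2 ⟨hv.le, hvpi⟩) hv
      simpa using this
    rw [Real.cos_two_mul]
    nlinarith
  | succ m hm2 ih =>
    intro v hv hle
    push_cast at hle ⊢
    have hm3 : (3:ℝ) ≤ (m:ℝ) + 1 := by
      have : (2:ℝ) ≤ (m:ℝ) := by exact_mod_cast hm2
      linarith
    have h3v : 3 * v ≤ π/2 := by nlinarith [mul_le_mul_of_nonneg_right hm3 hv.le]
    have hv2 : v < π/2 := by linarith [pi_pos]
    have hmv : (m:ℝ) * v ≤ π/2 := by nlinarith
    have hcv : 0 < Real.cos v := Real.cos_pos_of_mem_Ioo ⟨by linarith [pi_pos], hv2⟩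
    have hsin1 : 0 ≤ Real.sin ((m:ℝ)*v) := by
      apply Real.sin_nonneg_of_nonneg_of_le_pi
      · positivity
      · linarith [pi_pos]
    have hsinv : 0 ≤ Real.sin v := by
      apply Real.sin_nonneg_of_nonneg_of_le_pi
      · linarith
      · linarith [pi_pos]
    have step : Real.cos (((m:ℝ)+1) * v) ≤ Real.cos ((m:ℝ)*v) * Real.cos v := by
      have h : ((m:ℝ)+1) * v = (m:ℝ)*v + v := by ring
      rw [h, Real.cos_add]
      nlinarith [mul_nonneg hsin1 hsinv]
    have ihv := ih v hv hmv
    calc Real.cos (((m:ℝ)+1) * v) ≤ Real.cos ((m:ℝ)*v) * Real.cos v := step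
      _ < Real.cos v ^ m * Real.cos v := by nlinarith
      _ = Real.cos v ^ (m+1) := by ring

lemma eval_derivative_mul_eq_zero (p q : ℝ[X]) (x : ℝ) (hp : eval x p = 0)
    (hq : eval x q = 0) : eval x (derivative (p*q)) = 0 := by
  rw [derivative_mul]; simp [hp, hq]

lemma eval_derivative2_mul_eq_zero (p w : ℝ[X]) (x : ℝ) (hp : eval x p = 0) (hw : eval x w = 0)
    (hw' : eval x (derivative w) = 0) :
    eval x (derivative (derivative (p*w))) = 0 := by
  rw [derivative_mul, derivative_add, derivative_mul, derivative_mul]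
  simp [hp, hw, hw']

set_option maxHeartbeats 2000000 in
lemma main_lemma (K : ℕ) (hK : 3 ≤ K) (i : Fin K → ℕ) (hi : ∀ k, 1 ≤ i k) (ε : ℝ)
    (hε : ε = 1 ∨ ε = -1) :
    ∃ z : ℂ, z.im ≠ 0 ∧ aeval z ((∏ k, Z (i k)) - C ε) = 0 := by
  by_contra hcon
  push_neg at hcon
  set f : ℝ[X] := ∏ k, Z (i k) with hf
  set g : ℝ[X] := f - C ε with hg
  have hroots : ∀ z : ℂ, aeval z g = 0 → z.im = 0 := by
    intro z hz
    by_contra him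
    exact hcon z him hz
  have hfmon : f.Monic := monic_prod_of_monic _ _ (fun k _ => (Z_monic_deg (i k)).1)
  have hfdeg : f.natDegree = ∑ k, i k := by
    rw [hf, natDegree_prod _ _ (fun k _ => (Z_monic_deg (i k)).1.ne_zero)]
    exact Finset.sum_congr rfl fun k _ => (Z_monic_deg (i k)).2
  have hKsum : K ≤ ∑ k, i k := by
    calc K = ∑ _k : Fin K, 1 := by simp
    _ ≤ ∑ k, i k := Finset.sum_le_sum fun k _ => hi k
  have hgdeg : 0 < g.natDegree := by
    rw [hg, natDegree_sub_C, hfdeg]; omega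
  have hg0 : g ≠ 0 := by
    intro h
    rw [h] at hgdeg
    simp at hgdeg
  have hderg : derivative g = derivative f := by rw [hg]; simp
  -- choose the three indices with largest i
  obtain ⟨k₁, hk₁u, hk₁⟩ := Finset.exists_max_image (Finset.univ : Finset (Fin K)) i
    ⟨⟨0, by omega⟩, Finset.mem_univ _⟩
  have hcard1 : (Finset.univ.erase k₁).Nonempty := by
    rw [← Finset.card_pos, Finset.card_erase_of_mem hk₁u, Finset.card_univ, Fintype.card_fin]
    omega
  obtain ⟨k₂, hk₂m, hk₂⟩ := Finset.exists_max_image _ i hcard1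
  have hcard2 : ((Finset.univ.erase k₁).erase k₂).Nonempty := by
    rw [← Finset.card_pos, Finset.card_erase_of_mem hk₂m, Finset.card_erase_of_mem hk₁u,
      Finset.card_univ, Fintype.card_fin]
    omega
  obtain ⟨k₃, hk₃m, hk₃⟩ := Finset.exists_max_image _ i hcard2
  have hk21 : k₂ ≠ k₁ := (Finset.mem_erase.1 hk₂m).1
  have hk32 : k₃ ≠ k₂ := (Finset.mem_erase.1 hk₃m).1
  have hk31 : k₃ ≠ k₁ := (Finset.mem_erase.1 (Finset.mem_erase.1 hk₃m).2).1
  have hi12 : i k₂ ≤ i k₁ := hk₁ k₂ (Finset.mem_univ _)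
  have hi23 : i k₃ ≤ i k₂ := hk₂ k₃ (Finset.mem_erase.1 hk₃m).2
  set s₂ : Finset (Fin K) := (Finset.univ.erase k₁).erase k₂ with hs₂
  have hrest : ∀ k ∈ s₂, i k ≤ i k₃ := hk₃
  have hk₃s₂ : k₃ ∈ s₂ := hk₃m
  -- m values
  set m : Fin K → ℝ := fun k => 2*(i k : ℝ)+1 with hm
  have hm3 : ∀ k, (3:ℝ) ≤ m k := by
    intro k
    have : (1:ℝ) ≤ (i k : ℝ) := by exact_mod_cast hi k
    simp only [hm]
    linarith
  have hmpos : ∀ k, (0:ℝ) < m k := fun k => lt_of_lt_of_le (by norm_num) (hm3 k)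
  have hmmono : ∀ a b : Fin K, i a ≤ i b → m a ≤ m b := by
    intro a b hab
    have : (i a : ℝ) ≤ (i b : ℝ) := by exact_mod_cast hab
    simp only [hm]; linarith
  set u₁ : ℝ := π / m k₁ with hu₁
  set u₂ : ℝ := π / m k₂ with hu₂
  set u₃ : ℝ := π / m k₃ with hu₃
  have hu_pos : ∀ k : Fin K, 0 < π / m k := fun k => div_pos pi_pos (hmpos k)
  have hu_le3 : ∀ k : Fin K, π / m k ≤ π / 3 := by
    intro k
    apply div_le_div_of_nonneg_left pi_pos.le (by norm_num) (hm3 k)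
  have hu12 : u₁ ≤ u₂ :=
    div_le_div_of_nonneg_left pi_pos.le (hmpos k₂) (hmmono _ _ hi12)
  have hu23 : u₂ ≤ u₃ :=
    div_le_div_of_nonneg_left pi_pos.le (hmpos k₃) (hmmono _ _ hi23)
  set b₁ : ℝ := 2 - 2*Real.cos u₁ with hb₁
  set b₂ : ℝ := 2 - 2*Real.cos u₂ with hb₂
  set b₃ : ℝ := 2 - 2*Real.cos u₃ with hb₃
  have hπ3 : π/3 ≤ π := by linarith [pi_pos]
  have hb1pos : 0 < b₁ := by
    have : Real.cos u₁ < Real.cos 0 :=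
      Real.cos_lt_cos_of_nonneg_of_le_pi (le_refl 0) ((hu_le3 k₁).trans hπ3) (hu_pos k₁)
    rw [Real.cos_zero] at this
    simp only [hb₁]
    linarith
  have hb12 : b₁ ≤ b₂ := by
    have : Real.cos u₂ ≤ Real.cos u₁ :=
      Real.cos_le_cos_of_nonneg_of_le_pi (hu_pos k₁).le ((hu_le3 k₂).trans hπ3) hu12
    simp only [hb₁, hb₂]; linarith
  have hb23 : b₂ ≤ b₃ := by
    have : Real.cos u₃ ≤ Real.cos u₂ :=
      Real.cos_le_cos_of_nonneg_of_le_pi (hu_pos k₂).le ((hu_le3 k₃).trans hπ3) hu23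
    simp only [hb₂, hb₃]; linarith
  -- evaluation identity wrapper
  have hZval : ∀ (k : Fin K) (u : ℝ),
      eval (2 - 2*Real.cos u) (Z (i k)) * Real.cos (u/2)
        = (-1)^(i k) * Real.cos (m k * (u/2)) := by
    intro k u
    have h := Z_eval_cos u (i k)
    simpa [hm] using h
  have hcoshalf : ∀ u : ℝ, 0 < u → u ≤ π/3 → 0 < Real.cos (u/2) := by
    intro u h0 h3
    apply Real.cos_pos_of_mem_Ioo
    constructor
    · nlinarith [pi_pos]
    · nlinarith [pi_pos]
  -- the first root of each factor
  have hroot : ∀ kj : Fin K, eval (2 - 2*Real.cos (π / m kj)) (Z (i kj)) = 0 := by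
    intro kj
    have harg : m kj * ((π / m kj)/2) = π/2 := by
      field_simp
      exact mul_inv_cancel₀ (hmpos kj).ne'
    have h := hZval kj (π / m kj)
    rw [harg, Real.cos_pi_div_two, mul_zero] at h
    have hcp : 0 < Real.cos ((π / m kj)/2) := hcoshalf _ (hu_pos kj) (hu_le3 kj)
    rcases mul_eq_zero.1 h with h' | h'
    · exact h'
    · exact absurd h' (ne_of_gt hcp)
  -- Key bound: |f| < 1 on (0, b₃]
  have F1 : ∀ x : ℝ, 0 < x → x ≤ b₃ → |eval x f| < 1 := by
    intro x hx0 hxb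
    set y : ℝ := 1 - x/2 with hy
    have hycos : Real.cos u₃ ≤ y := by rw [hy]; rw [hb₃] at hxb; linarith
    have hy1 : y < 1 := by rw [hy]; linarith
    have hym1 : -1 ≤ y := le_trans (Real.neg_one_le_cos u₃) hycos
    set u : ℝ := Real.arccos y with hu
    have hcu : Real.cos u = y := Real.cos_arccos hym1 hy1.le
    have hu0 : 0 < u := by rw [hu]; exact Real.arccos_pos.2 hy1
    have huπ : u ≤ π := Real.arccos_le_pi y
    have huu3 : u ≤ u₃ := by
      by_contra hlt
      push_neg at hlt
      have := Real.cos_lt_cos_of_nonneg_of_le_pi (hu_pos k₃).le huπ hlt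
      rw [hcu] at this
      linarith
    have hxu : x = 2 - 2*Real.cos u := by rw [hcu, hy]; ring
    have huπ3 : u ≤ π/3 := le_trans huu3 (hu_le3 k₃)
    have hcv : 0 < Real.cos (u/2) := hcoshalf u hu0 huπ3
    have hcv1 : Real.cos (u/2) ≤ 1 := Real.cos_le_one _
    -- product identity
    have hprod : eval x f * Real.cos (u/2)^K
        = ∏ k, ((-1:ℝ)^(i k) * Real.cos (m k * (u/2))) := by
      calc eval x f * Real.cos (u/2)^K
          = ∏ k, (eval (2-2*Real.cos u) (Z (i k)) * Real.cos (u/2)) := by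
            rw [Finset.prod_mul_distrib, Finset.prod_const, Finset.card_univ, Fintype.card_fin,
              ← eval_prod, ← hf, ← hxu]
        _ = ∏ k, ((-1:ℝ)^(i k) * Real.cos (m k * (u/2))) :=
            Finset.prod_congr rfl (fun k _ => hZval k u)
    have habs : |eval x f| * Real.cos (u/2)^K = ∏ k, |Real.cos (m k * (u/2))| := by
      have h1 := congrArg (fun t : ℝ => |t|) hprod
      simp only [abs_mul, abs_pow, Finset.abs_prod] at h1
      rw [abs_of_pos hcv] at h1
      rw [h1]
      exact Finset.prod_congr rfl fun k _ => by simp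
    -- bound each small factor
    have hmu_le : ∀ k ∈ s₂, m k * (u/2) ≤ π/2 := by
      intro k hk
      have h1 : m k ≤ m k₃ := hmmono _ _ (hrest k hk)
      have h2 : m k * u ≤ m k₃ * u₃ := by
        apply mul_le_mul h1 huu3 hu0.le (hmpos k₃).le
      have h3 : m k₃ * u₃ = π := by
        rw [hu₃]; field_simp; exact div_self (hmpos k₃).ne'
      have h5 : m k * u ≤ π := le_trans h2 (le_of_eq h3)
      calc m k * (u/2) = (m k * u)/2 := by ring
        _ ≤ π/2 := div_le_div_of_nonneg_right h5 (by norm_num)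

    have hfac : ∀ k ∈ s₂, |Real.cos (m k * (u/2))| < Real.cos (u/2) ^ (2*(i k)+1) := by
      intro k hk
      have hnn : 0 ≤ Real.cos (m k * (u/2)) := by
        apply Real.cos_nonneg_of_mem_Icc
        constructor
        · have h5 : 0 ≤ m k * (u/2) := mul_nonneg (hmpos k).le (by linarith)
          linarith [pi_pos]
        · exact hmu_le k hk
      rw [abs_of_nonneg hnn]
      have hcast : ((2*(i k)+1 : ℕ) : ℝ) = m k := by
        simp only [hm]; push_cast; ring
      have := cos_pow_lt (2*(i k)+1) (by have := hi k; omega) (u/2) (by linarith) (by rw [hcast]; exact hmu_le k hk)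
      rwa [hcast] at this
    -- assemble
    set P₂ : ℝ := ∏ k ∈ s₂, |Real.cos (m k * (u/2))| with hP₂
    have hsplit : ∏ k, |Real.cos (m k * (u/2))|
        = |Real.cos (m k₁ * (u/2))| * (|Real.cos (m k₂ * (u/2))| * P₂) := by
      rw [hP₂, hs₂,
        Finset.mul_prod_erase _ (fun k => |Real.cos (m k * (u/2))|) hk₂m,
        Finset.mul_prod_erase _ (fun k => |Real.cos (m k * (u/2))|) (Finset.mem_univ k₁)]
    have hP₂nn : 0 ≤ P₂ := Finset.prod_nonneg fun k _ => abs_nonneg _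
    have hstep1 : ∏ k, |Real.cos (m k * (u/2))| ≤ P₂ := by
      rw [hsplit]
      have h1 := abs_cos_le_one (m k₁ * (u/2))
      have h2 := abs_cos_le_one (m k₂ * (u/2))
      calc |Real.cos (m k₁ * (u/2))| * (|Real.cos (m k₂ * (u/2))| * P₂)
          ≤ 1 * (1 * P₂) := by
            apply mul_le_mul h1 _ _ zero_le_one
            · apply mul_le_mul h2 le_rfl hP₂nn zero_le_one
            · exact mul_nonneg (abs_nonneg _) hP₂nn
        _ = P₂ := by ring
    -- strict bound on P₂
    set s₃ : Finset (Fin K) := s₂.erase k₃ with hs₃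
    have hsplit3 : P₂ = |Real.cos (m k₃ * (u/2))| * ∏ k ∈ s₃, |Real.cos (m k * (u/2))| := by
      rw [hP₂, hs₃, Finset.mul_prod_erase _ (fun k => |Real.cos (m k * (u/2))|) hk₃s₂]
    have hB : (∏ k ∈ s₃, |Real.cos (m k * (u/2))|) ≤ ∏ k ∈ s₃, Real.cos (u/2) ^ (2*(i k)+1) := by
      apply Finset.prod_le_prod (fun k _ => abs_nonneg _)
      intro k hk
      exact (hfac k (Finset.mem_of_mem_erase hk)).le
    have hB'pos : 0 < ∏ k ∈ s₃, Real.cos (u/2) ^ (2*(i k)+1) :=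
      Finset.prod_pos fun k _ => pow_pos hcv _
    have hP₂lt : P₂ < Real.cos (u/2) ^ (∑ k ∈ s₂, (2*(i k)+1)) := by
      rw [hsplit3, ← Finset.prod_pow_eq_pow_sum,
        ← Finset.mul_prod_erase _ (fun k => Real.cos (u/2) ^ (2*(i k)+1)) hk₃s₂, ← hs₃]
      calc |Real.cos (m k₃ * (u/2))| * ∏ k ∈ s₃, |Real.cos (m k * (u/2))|
          ≤ |Real.cos (m k₃ * (u/2))| * ∏ k ∈ s₃, Real.cos (u/2) ^ (2*(i k)+1) :=
            mul_le_mul_of_nonneg_left hB (abs_nonneg _)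
        _ < Real.cos (u/2) ^ (2*(i k₃)+1) * ∏ k ∈ s₃, Real.cos (u/2) ^ (2*(i k)+1) :=
            mul_lt_mul_of_pos_right (hfac k₃ hk₃s₂) hB'pos
    have hcards₂ : s₂.card = K - 2 := by
      rw [hs₂, Finset.card_erase_of_mem hk₂m, Finset.card_erase_of_mem hk₁u,
        Finset.card_univ, Fintype.card_fin]
      omega
    have hSK : K ≤ ∑ k ∈ s₂, (2*(i k)+1) := by
      have h1 : ∑ _k ∈ s₂, 3 ≤ ∑ k ∈ s₂, (2*(i k)+1) :=
        Finset.sum_le_sum fun k _ => by have := hi k; omega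
      rw [Finset.sum_const, hcards₂, smul_eq_mul] at h1
      omega
    have hfin : Real.cos (u/2) ^ (∑ k ∈ s₂, (2*(i k)+1)) ≤ Real.cos (u/2) ^ K :=
      pow_le_pow_of_le_one hcv.le hcv1 hSK
    have : |eval x f| * Real.cos (u/2)^K < 1 * Real.cos (u/2)^K := by
      rw [one_mul, habs]
      calc ∏ k, |Real.cos (m k * (u/2))| ≤ P₂ := hstep1
        _ < Real.cos (u/2) ^ (∑ k ∈ s₂, (2*(i k)+1)) := hP₂lt
        _ ≤ Real.cos (u/2) ^ K := hfin
    exact lt_of_mul_lt_mul_right this (pow_pos hcv K).le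
  -- roots of f at the b points
  have hfb : ∀ (b : ℝ) (k : Fin K), eval b (Z (i k)) = 0 → eval b f = 0 := by
    intro b k h
    rw [hf, eval_prod]
    exact Finset.prod_eq_zero (Finset.mem_univ k) h
  have hfb₁ : eval b₁ f = 0 := hfb b₁ k₁ (hroot k₁)
  have hfb₂ : eval b₂ f = 0 := hfb b₂ k₂ (hroot k₂)
  have hfb₃ : eval b₃ f = 0 := hfb b₃ k₃ (hroot k₃)
  -- splitting the product
  have split2 : ∀ a b : Fin K, a ≠ b →
      f = Z (i a) * (Z (i b) * ∏ k ∈ (Finset.univ.erase a).erase b, Z (i k)) := by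
    intro a b hab
    rw [hf,
      ← Finset.mul_prod_erase _ (fun k => Z (i k)) (Finset.mem_univ a),
      ← Finset.mul_prod_erase _ (fun k => Z (i k))
        (Finset.mem_erase.2 ⟨hab.symm, Finset.mem_univ b⟩)]
  -- Rolle
  have rolle : ∀ a b : ℝ, a < b → eval a f = 0 → eval b f = 0 →
      ∃ c, a < c ∧ c < b ∧ eval c (derivative f) = 0 := by
    intro a b hab ha hb
    obtain ⟨c, hc, hc'⟩ := exists_deriv_eq_zero hab
      ((f.continuous).continuousOn) (by rw [ha, hb])
    refine ⟨c, hc.1, hc.2, ?_⟩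
    rwa [Polynomial.deriv] at hc'
  -- main contradiction machine for two critical points
  have finish2 : ∀ c₁ c₂ : ℝ, c₁ < c₂ → (∀ x, c₁ ≤ x → x ≤ c₂ → 0 < x ∧ x ≤ b₃) →
      eval c₁ (derivative f) = 0 → eval c₂ (derivative f) = 0 → False := by
    intro c₁ c₂ hlt hin hd₁ hd₂
    have hgne : ∀ x, c₁ ≤ x → x ≤ c₂ → eval x g ≠ 0 := by
      intro x h1 h2 h0
      obtain ⟨hx0, hxb⟩ := hin x h1 h2
      have hF := F1 x hx0 hxb
      rw [hg, eval_sub, eval_C, sub_eq_zero] at h0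
      rw [h0] at hF
      rcases hε with h | h <;> rw [h] at hF <;> simp at hF
    set φ : ℝ → ℝ := fun x => eval x (derivative f) / eval x g with hφ
    have hcont : ContinuousOn φ (Set.Icc c₁ c₂) := by
      apply ContinuousOn.div
      · exact ((derivative f).continuous).continuousOn
      · exact (g.continuous).continuousOn
      · intro x hx
        exact hgne x hx.1 hx.2
    have hφeq : φ c₁ = φ c₂ := by simp [hφ, hd₁, hd₂]
    obtain ⟨c, hc, hder⟩ := exists_deriv_eq_zero hlt hcont hφeq
    have hgc : eval c g ≠ 0 := hgne c hc.1.le hc.2.le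
    have h1 : HasDerivAt (fun x => eval x (derivative f))
        (eval c (derivative (derivative f))) c := Polynomial.hasDerivAt _ c
    have h2 : HasDerivAt (fun x => eval x g) (eval c (derivative g)) c :=
      Polynomial.hasDerivAt _ c
    have hdiv := (h1.div h2 hgc).deriv
    rw [show ((fun x => eval x (derivative f)) / fun x => eval x g) = φ from rfl] at hdiv
    rw [hder] at hdiv
    have hnum : eval c (derivative (derivative f)) * eval c g
        - eval c (derivative f) * eval c (derivative g) = 0 := by
      have hpow : eval c g ^ 2 ≠ 0 := pow_ne_zero _ hgc
      field_simp at hdiv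
      linarith [hdiv]
    rw [hderg] at hnum
    have hlag := (laguerre g.natDegree g rfl hg0 hroots c).2 hgc hgdeg
    rw [hderg] at hlag
    nlinarith [hlag, hnum]
  -- contradiction at a triple root
  have finish3 : ∀ x₀ : ℝ, eval x₀ f = 0 → eval x₀ (derivative f) = 0 →
      eval x₀ (derivative (derivative f)) = 0 → False := by
    intro x₀ h0 h1 h2
    have hgb : eval x₀ g ≠ 0 := by
      rw [hg, eval_sub, eval_C, h0]
      rcases hε with h | h <;> rw [h] <;> norm_num
    have hlag := (laguerre g.natDegree g rfl hg0 hroots x₀).2 hgb hgdeg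
    rw [hderg, h1, h2] at hlag
    simp at hlag
  -- case analysis on coincidences of b₁ b₂ b₃
  rcases eq_or_lt_of_le hb12 with h12 | h12
  · rcases eq_or_lt_of_le hb23 with h23 | h23
    · -- b₁ = b₂ = b₃ : triple root
      have hZ1 : eval b₁ (Z (i k₁)) = 0 := hroot k₁
      have hZ2 : eval b₁ (Z (i k₂)) = 0 := by rw [h12]; exact hroot k₂
      have hZ3 : eval b₁ (Z (i k₃)) = 0 := by rw [h12, h23]; exact hroot k₃
      have hsp3 : f = Z (i k₁) * (Z (i k₂) * (Z (i k₃) * ∏ k ∈ s₂.erase k₃, Z (i k))) := by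
        rw [hf, ← Finset.mul_prod_erase _ (fun k => Z (i k)) (Finset.mem_univ k₁),
          ← Finset.mul_prod_erase _ (fun k => Z (i k)) hk₂m, ← hs₂,
          ← Finset.mul_prod_erase _ (fun k => Z (i k)) hk₃s₂]
      set V : ℝ[X] := Z (i k₃) * ∏ k ∈ s₂.erase k₃, Z (i k) with hV
      set W : ℝ[X] := Z (i k₂) * V with hW
      have hVe : eval b₁ V = 0 := by rw [hV, eval_mul, hZ3, zero_mul]
      have hWe : eval b₁ W = 0 := by rw [hW, eval_mul, hZ2, zero_mul]
      have hWd : eval b₁ (derivative W) = 0 :=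
        eval_derivative_mul_eq_zero _ _ _ hZ2 hVe
      have hd1 : eval b₁ (derivative f) = 0 := by
        rw [hsp3]
        exact eval_derivative_mul_eq_zero _ _ _ hZ1 hWe
      have hd2 : eval b₁ (derivative (derivative f)) = 0 := by
        rw [hsp3]
        exact eval_derivative2_mul_eq_zero _ _ _ hZ1 hWe hWd
      exact finish3 b₁ hfb₁ hd1 hd2
    · -- b₁ = b₂ < b₃ : double root at b₁, Rolle on [b₁, b₃]
      have hZ2 : eval b₁ (Z (i k₂)) = 0 := by rw [h12]; exact hroot k₂
      have hsp : f = Z (i k₁) * (Z (i k₂) * ∏ k ∈ (Finset.univ.erase k₁).erase k₂, Z (i k)) :=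
        split2 k₁ k₂ hk21.symm
      have hWe : eval b₁ (Z (i k₂) * ∏ k ∈ (Finset.univ.erase k₁).erase k₂, Z (i k)) = 0 := by
        rw [eval_mul, hZ2, zero_mul]
      have hd : eval b₁ (derivative f) = 0 := by
        rw [hsp]
        exact eval_derivative_mul_eq_zero _ _ _ (hroot k₁) hWe
      have hb13 : b₁ < b₃ := by rw [h12]; exact h23
      obtain ⟨c, hc1, hc3, hdc⟩ := rolle b₁ b₃ hb13 hfb₁ hfb₃
      apply finish2 b₁ c hc1 ?_ hd hdc
      intro x hx1 hx2
      exact ⟨lt_of_lt_of_le hb1pos hx1, le_trans hx2 hc3.le⟩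
  · rcases eq_or_lt_of_le hb23 with h23 | h23
    · -- b₁ < b₂ = b₃ : double root at b₂, Rolle on [b₁, b₂]
      have hZ3 : eval b₂ (Z (i k₃)) = 0 := by rw [h23]; exact hroot k₃
      have hsp : f = Z (i k₂) * (Z (i k₃) * ∏ k ∈ (Finset.univ.erase k₂).erase k₃, Z (i k)) :=
        split2 k₂ k₃ hk32.symm
      have hWe : eval b₂ (Z (i k₃) * ∏ k ∈ (Finset.univ.erase k₂).erase k₃, Z (i k)) = 0 := by
        rw [eval_mul, hZ3, zero_mul]
      have hd : eval b₂ (derivative f) = 0 := by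
        rw [hsp]
        exact eval_derivative_mul_eq_zero _ _ _ (hroot k₂) hWe
      obtain ⟨c, hc1, hc2, hdc⟩ := rolle b₁ b₂ h12 hfb₁ hfb₂
      apply finish2 c b₂ hc2 ?_ hdc hd
      intro x hx1 hx2
      constructor
      · calc (0:ℝ) < b₁ := hb1pos
          _ < c := hc1
          _ ≤ x := hx1
      · rw [← h23]; exact hx2
    · -- b₁ < b₂ < b₃ : Rolle twice
      obtain ⟨c₁, hc11, hc12, hdc1⟩ := rolle b₁ b₂ h12 hfb₁ hfb₂
      obtain ⟨c₂, hc21, hc22, hdc2⟩ := rolle b₂ b₃ h23 hfb₂ hfb₃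
      apply finish2 c₁ c₂ (lt_trans hc12 hc21) ?_ hdc1 hdc2
      intro x hx1 hx2
      constructor
      · calc (0:ℝ) < b₁ := hb1pos
          _ < c₁ := hc11
          _ ≤ x := hx1
      · exact le_trans hx2 hc22.le

theorem prod_Z_pm_one_nonreal_root (K : ℕ) (hK : 3 ≤ K) (i : Fin K → ℕ)
    (hi : ∀ k, 1 ≤ i k) :
    (∃ z : ℂ, z.im ≠ 0 ∧ (Polynomial.aeval z) ((∏ k, Z (i k)) - 1) = 0) ∧
    (∃ z : ℂ, z.im ≠ 0 ∧ (Polynomial.aeval z) ((∏ k, Z (i k)) + 1) = 0) := by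
  constructor
  · have h := main_lemma K hK i hi 1 (Or.inl rfl)
    simpa using h
  · have h := main_lemma K hK i hi (-1) (Or.inr rfl)
    have he : (∏ k, Z (i k)) - C (-1) = (∏ k, Z (i k)) + 1 := by
      simp [sub_neg_eq_add]
    rwa [he] at h
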